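/- Let σ > 1, set p = 1/(σ−1), and let ε > 0. Then there exist an integer n0 ≥ 2 and a real δ > 0 such that, defining for integers n ≥ 0 the sequences w_n = (n+n0)^{2p+1} (ln(n+n0))^{p+ε} and u_n = δ / ((n+n0)^{2p} (ln(n+n0))^{p}), one has u_1 − u_0 + u_0^σ ≤ 0 and, for every n ≥ 1, (w_n u_{n+1} + w_{n−1} u_{n−1}) / (w_n + w_{n−1}) − u_n + u_n^σ ≤ 0. -/

import Mathlib

open Real
set_option maxHeartbeats 2000000


noncomputable def FF (p ε t : ℝ) : ℝ := t ^ (2*p+1) * Real.log t ^ (p+ε)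
noncomputable def dFF (p ε t : ℝ) : ℝ :=
  t ^ (2*p) * Real.log t ^ (p+ε-1) * ((2*p+1) * Real.log t + (p+ε))
noncomputable def GG (p t : ℝ) : ℝ := t ^ (-(2*p)) * Real.log t ^ (-p)
noncomputable def dGG (p t : ℝ) : ℝ :=
  -(p * (t ^ (-(2*p)-1) * Real.log t ^ (-p-1) * (2*Real.log t + 1)))
noncomputable def ddGG (p t : ℝ) : ℝ :=
  p * (t ^ (-(2*p)-2) * Real.log t ^ (-p-2) *
    ((4*p+2)*(Real.log t*Real.log t) + (4*p+1)*Real.log t + (p+1)))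

lemma hasDerivAt_FF {p ε t : ℝ} (ht : 1 < t) : HasDerivAt (FF p ε) (dFF p ε t) t := by
  have ht0 : t ≠ 0 := by positivity
  have htp : (0:ℝ) < t := by linarith
  have hl : 0 < Real.log t := Real.log_pos ht
  have hl0 : Real.log t ≠ 0 := ne_of_gt hl
  have h1 : HasDerivAt (fun s : ℝ => s ^ (2*p+1)) ((2*p+1) * t ^ (2*p+1-1)) t :=
    Real.hasDerivAt_rpow_const (Or.inl ht0)
  have h2 : HasDerivAt (fun s : ℝ => Real.log s ^ (p+ε)) (t⁻¹ * (p+ε) * Real.log t ^ (p+ε-1)) t :=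
    (Real.hasDerivAt_log ht0).rpow_const (Or.inl hl0)
  have := h1.mul h2
  refine this.congr_deriv (Eq.symm ?_)
  unfold dFF
  rw [show (2*p+1-1 : ℝ) = 2*p by ring,
      show (2*p+1 : ℝ) = 2*p + 1 from rfl,
      Real.rpow_add_one ht0 (2*p),
      show (p+ε : ℝ) = (p+ε-1) + 1 by ring,
      Real.rpow_add_one hl0 (p+ε-1)]
  field_simp
  ring

lemma hasDerivAt_GG {p t : ℝ} (ht : 1 < t) : HasDerivAt (GG p) (dGG p t) t := by
  have ht0 : t ≠ 0 := by positivity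
  have hl : 0 < Real.log t := Real.log_pos ht
  have hl0 : Real.log t ≠ 0 := ne_of_gt hl
  have h1 : HasDerivAt (fun s : ℝ => s ^ (-(2*p))) ((-(2*p)) * t ^ (-(2*p)-1)) t :=
    Real.hasDerivAt_rpow_const (Or.inl ht0)
  have h2 : HasDerivAt (fun s : ℝ => Real.log s ^ (-p)) (t⁻¹ * (-p) * Real.log t ^ (-p-1)) t :=
    (Real.hasDerivAt_log ht0).rpow_const (Or.inl hl0)
  have := h1.mul h2
  refine this.congr_deriv (Eq.symm ?_)
  unfold dGG
  rw [show (-(2*p) : ℝ) = (-(2*p)-1) + 1 by ring, Real.rpow_add_one ht0 (-(2*p)-1),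
      show (-p : ℝ) = (-p-1) + 1 by ring, Real.rpow_add_one hl0 (-p-1)]
  field_simp
  ring

lemma hasDerivAt_dGG {p t : ℝ} (ht : 1 < t) : HasDerivAt (dGG p) (ddGG p t) t := by
  have ht0 : t ≠ 0 := by positivity
  have hl : 0 < Real.log t := Real.log_pos ht
  have hl0 : Real.log t ≠ 0 := ne_of_gt hl
  have h1 : HasDerivAt (fun s : ℝ => s ^ (-(2*p)-1)) ((-(2*p)-1) * t ^ (-(2*p)-1-1)) t :=
    Real.hasDerivAt_rpow_const (Or.inl ht0)
  have h2 : HasDerivAt (fun s : ℝ => Real.log s ^ (-p-1)) (t⁻¹ * (-p-1) * Real.log t ^ (-p-1-1)) t :=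
    (Real.hasDerivAt_log ht0).rpow_const (Or.inl hl0)
  have h3 : HasDerivAt (fun s : ℝ => 2 * Real.log s + 1) (2 * t⁻¹) t := by
    simpa using ((Real.hasDerivAt_log ht0).const_mul 2).add_const 1
  have h12 := h1.mul h2
  have h123 := (h12.mul h3).const_mul p
  have := h123.neg
  refine this.congr_deriv (Eq.symm ?_)
  unfold ddGG
  simp only [Pi.mul_apply]
  rw [show (-(2*p)-1-1 : ℝ) = -(2*p)-2 by ring,
      show (-p-1-1 : ℝ) = -p-2 by ring,
      show (-(2*p)-1 : ℝ) = (-(2*p)-2) + 1 by ring, Real.rpow_add_one ht0 (-(2*p)-2),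
      show (-p-1 : ℝ) = (-p-2) + 1 by ring, Real.rpow_add_one hl0 (-p-2)]
  field_simp
  ring


lemma mvt1 {f f' : ℝ → ℝ} {a : ℝ} (H : ∀ t ∈ Set.Icc a (a+1), HasDerivAt f (f' t) t) :
    ∃ c ∈ Set.Ioo a (a+1), f (a+1) - f a = f' c := by
  have hab : a < a + 1 := by linarith
  obtain ⟨c, hc, he⟩ := exists_hasDerivAt_eq_slope f f' hab
    (fun t ht => (H t ht).continuousAt.continuousWithinAt)
    (fun t ht => H t ⟨ht.1.le, ht.2.le⟩)
  rw [show a + 1 - a = (1:ℝ) by ring, div_one] at he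
  exact ⟨c, hc, he.symm⟩


lemma dFF_lower {p ε y t x : ℝ} (hp : 0 < p) (hε : 0 < ε) (hy : 1 < y)
    (h1 : y ≤ t) (h2 : t ≤ x) :
    y ^ (2*p) * Real.log y ^ (p+ε) * ((2*p+1) + (p+ε)/Real.log x) ≤ dFF p ε t := by
  have hy0 : (0:ℝ) < y := by linarith
  have ht1 : (1:ℝ) < t := lt_of_lt_of_le hy h1
  have ht0 : (0:ℝ) < t := by linarith
  have hLy : 0 < Real.log y := Real.log_pos hy
  have hLt : 0 < Real.log t := Real.log_pos ht1
  have hLx : 0 < Real.log x := Real.log_pos (lt_of_lt_of_le ht1 h2)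
  have hLyt : Real.log y ≤ Real.log t := Real.log_le_log hy0 h1
  have hLtx : Real.log t ≤ Real.log x := Real.log_le_log ht0 h2
  have hA : y ^ (2*p) ≤ t ^ (2*p) := Real.rpow_le_rpow hy0.le h1 (by positivity)
  have hB : Real.log y ^ (p+ε) ≤ Real.log t ^ (p+ε) :=
    Real.rpow_le_rpow hLy.le hLyt (by positivity)
  have hC : Real.log y ^ (p+ε) / Real.log x ≤ Real.log t ^ (p+ε-1) := by
    rw [Real.rpow_sub_one (ne_of_gt hLt)]
    exact div_le_div₀ (by positivity) hB hLt hLtx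
  have hA0 : (0:ℝ) ≤ y ^ (2*p) := by positivity
  have hB0 : (0:ℝ) ≤ Real.log y ^ (p+ε) := by positivity
  have e1 : y ^ (2*p) * Real.log y ^ (p+ε) ≤ t ^ (2*p) * Real.log t ^ (p+ε) :=
    mul_le_mul hA hB hB0 (by positivity)
  have e2 : y ^ (2*p) * (Real.log y ^ (p+ε) / Real.log x) ≤ t ^ (2*p) * Real.log t ^ (p+ε-1) :=
    mul_le_mul hA hC (by positivity) (by positivity)
  have expand : dFF p ε t =
      (2*p+1) * (t ^ (2*p) * Real.log t ^ (p+ε)) + (p+ε) * (t ^ (2*p) * Real.log t ^ (p+ε-1)) := by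
    unfold dFF
    rw [show (p+ε : ℝ) = (p+ε-1) + 1 by ring, Real.rpow_add_one (ne_of_gt hLt)]
    ring_nf
  rw [expand]
  have c1 : (0:ℝ) ≤ 2*p+1 := by linarith
  have c2 : (0:ℝ) ≤ p+ε := by linarith
  have goalexp : y ^ (2*p) * Real.log y ^ (p+ε) * ((2*p+1) + (p+ε)/Real.log x)
      = (2*p+1) * (y ^ (2*p) * Real.log y ^ (p+ε))
        + (p+ε) * (y ^ (2*p) * (Real.log y ^ (p+ε) / Real.log x)) := by ring
  rw [goalexp]
  have := mul_le_mul_of_nonneg_left e1 c1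
  have := mul_le_mul_of_nonneg_left e2 c2
  linarith

lemma neg_dGG_lower {p t z : ℝ} (hp : 0 < p) (ht : 1 < t) (h : t ≤ z) :
    p * (z ^ (-(2*p)-1) * Real.log z ^ (-p-1) * (2*Real.log z + 1)) ≤ -dGG p t := by
  have ht0 : (0:ℝ) < t := by linarith
  have hz1 : (1:ℝ) < z := lt_of_lt_of_le ht h
  have hLt : 0 < Real.log t := Real.log_pos ht
  have hLz : 0 < Real.log z := Real.log_pos hz1
  have hLtz : Real.log t ≤ Real.log z := Real.log_le_log ht0 h
  have hA : z ^ (-(2*p)-1) ≤ t ^ (-(2*p)-1) :=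
    Real.rpow_le_rpow_of_nonpos ht0 h (by linarith)
  have hB : Real.log z ^ (-p) ≤ Real.log t ^ (-p) :=
    Real.rpow_le_rpow_of_nonpos hLt hLtz (by linarith)
  have hC : Real.log z ^ (-p-1) ≤ Real.log t ^ (-p-1) :=
    Real.rpow_le_rpow_of_nonpos hLt hLtz (by linarith)
  have expand : ∀ s : ℝ, 1 < s →
      s ^ (-(2*p)-1) * Real.log s ^ (-p-1) * (2*Real.log s + 1)
        = 2 * (s ^ (-(2*p)-1) * Real.log s ^ (-p)) + s ^ (-(2*p)-1) * Real.log s ^ (-p-1) := by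
    intro s hs
    rw [show (-p : ℝ) = (-p-1) + 1 by ring,
      Real.rpow_add_one (ne_of_gt (Real.log_pos hs))]
    ring
  unfold dGG
  rw [neg_neg]
  rw [mul_le_mul_iff_right₀ hp, expand t ht, expand z hz1]
  have e1 : z ^ (-(2*p)-1) * Real.log z ^ (-p) ≤ t ^ (-(2*p)-1) * Real.log t ^ (-p) :=
    mul_le_mul hA hB (by positivity) (by positivity)
  have e2 : z ^ (-(2*p)-1) * Real.log z ^ (-p-1) ≤ t ^ (-(2*p)-1) * Real.log t ^ (-p-1) :=
    mul_le_mul hA hC (by positivity) (by positivity)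
  linarith

lemma ddGG_upper {p t y z : ℝ} (hp : 0 < p) (hy : 1 < y) (h1 : y ≤ t) (h2 : t ≤ z) :
    ddGG p t ≤ p * (y ^ (-(2*p)-2) * Real.log y ^ (-p-2) *
      ((4*p+2)*(Real.log z*Real.log z) + (4*p+1)*Real.log z + (p+1))) := by
  have hy0 : (0:ℝ) < y := by linarith
  have ht1 : (1:ℝ) < t := lt_of_lt_of_le hy h1
  have ht0 : (0:ℝ) < t := by linarith
  have hLy : 0 < Real.log y := Real.log_pos hy
  have hLt : 0 < Real.log t := Real.log_pos ht1
  have hLz : 0 < Real.log z := Real.log_pos (lt_of_lt_of_le ht1 h2)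
  have hLyt : Real.log y ≤ Real.log t := Real.log_le_log hy0 h1
  have hLtz : Real.log t ≤ Real.log z := Real.log_le_log ht0 h2
  have hA : t ^ (-(2*p)-2) ≤ y ^ (-(2*p)-2) :=
    Real.rpow_le_rpow_of_nonpos hy0 h1 (by linarith)
  have hB : Real.log t ^ (-p-2) ≤ Real.log y ^ (-p-2) :=
    Real.rpow_le_rpow_of_nonpos hLy hLyt (by linarith)
  have hQ : (4*p+2)*(Real.log t*Real.log t) + (4*p+1)*Real.log t + (p+1)
      ≤ (4*p+2)*(Real.log z*Real.log z) + (4*p+1)*Real.log z + (p+1) := by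
    nlinarith [mul_le_mul hLtz hLtz hLt.le hLz.le]
  unfold ddGG
  rw [mul_le_mul_iff_right₀ hp]
  have hQ0 : (0:ℝ) ≤ (4*p+2)*(Real.log t*Real.log t) + (4*p+1)*Real.log t + (p+1) := by positivity
  exact mul_le_mul (mul_le_mul hA hB (by positivity) (by positivity)) hQ hQ0 (by positivity)

lemma FF_diff_lower {p ε : ℝ} (hp : 0 < p) (hε : 0 < ε) {x : ℝ} (hx : 3 ≤ x) :
    (x-1) ^ (2*p) * Real.log (x-1) ^ (p+ε) * ((2*p+1) + (p+ε)/Real.log x)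
      ≤ FF p ε x - FF p ε (x-1) := by
  obtain ⟨c, hc, he⟩ := mvt1 (f := FF p ε) (f' := dFF p ε) (a := x-1)
    (fun t ht => hasDerivAt_FF (by cases ht; linarith))
  rw [show x - 1 + 1 = x by ring] at he hc
  rw [he]
  exact dFF_lower hp hε (by linarith) hc.1.le hc.2.le

lemma GG_diff_lower {p : ℝ} (hp : 0 < p) {x : ℝ} (hx : 2 ≤ x) :
    p * ((x+1) ^ (-(2*p)-1) * Real.log (x+1) ^ (-p-1) * (2*Real.log (x+1) + 1))
      ≤ GG p x - GG p (x+1) := by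
  obtain ⟨c, hc, he⟩ := mvt1 (f := GG p) (f' := dGG p) (a := x)
    (fun t ht => hasDerivAt_GG (by cases ht; linarith))
  have : GG p x - GG p (x+1) = -dGG p c := by rw [← he]; ring
  rw [this]
  exact neg_dGG_lower hp (by linarith [hc.1]) hc.2.le

lemma GG_seconddiff_upper {p : ℝ} (hp : 0 < p) {x : ℝ} (hx : 3 ≤ x) :
    GG p (x+1) - 2*GG p x + GG p (x-1)
      ≤ p * ((x-1) ^ (-(2*p)-2) * Real.log (x-1) ^ (-p-2) *
        ((4*p+2)*(Real.log (x+1)*Real.log (x+1)) + (4*p+1)*Real.log (x+1) + (p+1))) := by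
  have hshift : ∀ t : ℝ, 1 < t →
      HasDerivAt (fun s => GG p (s+1) - GG p s) (dGG p (t+1) - dGG p t) t := by
    intro t ht
    have h1 : HasDerivAt (fun s : ℝ => GG p (s+1)) (dGG p (t+1)) t := by
      have := (hasDerivAt_GG (p := p) (t := t+1) (by linarith)).comp t
        ((hasDerivAt_id t).add_const 1)
      rw [mul_one] at this
      exact this
    exact h1.sub (hasDerivAt_GG ht)
  obtain ⟨c, hc, he⟩ := mvt1 (f := fun s => GG p (s+1) - GG p s)
    (f' := fun t => dGG p (t+1) - dGG p t) (a := x-1)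
    (fun t ht => hshift t (by cases ht; linarith))
  rw [show x - 1 + 1 = x by ring] at he hc
  obtain ⟨c2, hc2, he2⟩ := mvt1 (f := dGG p) (f' := ddGG p) (a := c)
    (fun t ht => hasDerivAt_dGG (by cases ht; linarith [hc.1]))
  have key : GG p (x+1) - 2*GG p x + GG p (x-1) = ddGG p c2 := by
    have : GG p (x+1) - 2*GG p x + GG p (x-1)
        = (GG p (x+1) - GG p x) - (GG p x - GG p (x-1)) := by ring
    rw [this, he, ← he2]
  rw [key]
  exact ddGG_upper hp (by linarith) (by linarith [hc.1, hc2.1]) (by linarith [hc.2, hc2.2])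

lemma claimC_core {p ε Lm Lp r1 r2 v u : ℝ} (hp : 0 < p) (hε : 0 < ε)
    (hv0 : 0 ≤ v)
    (hLm1 : 1 ≤ Lm) (hLmLp : Lm ≤ Lp)
    (hw : Lp - Lm ≤ 2*v)
    (hεLm : 2 ≤ ε*Lm)
    (hKv : (2*(5*p+2+ε) + 2*(8*p+6)*(3*p+1+ε)) * (Lp+1)^2 * v ≤ 1)
    (hρ1 : 1 - (4*p+2)*v ≤ r1)
    (hρ2 : 1 - (2*p+2)*v ≤ r2)
    (hρ1nn : 0 ≤ 1 - (4*p+2)*v) (hρ2nn : 0 ≤ 1 - (2*p+2)*v)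
    (hu1 : 1 - v ≤ u) (hu2 : u ≤ 1) :
    ε*Lm ≤ r1*r2*(((2*p+1)*Lm + (p+ε)*u)*(2*Lp+1))
      - ((4*p+2)*(Lp*Lp) + (4*p+1)*Lp + (p+1)) := by
  have hLp1 : 1 ≤ Lp := le_trans hLm1 hLmLp
  have hv1 : v ≤ 1 := by nlinarith [mul_nonneg (by linarith : (0:ℝ) ≤ 4*p) hv0]
  have hu0 : 0 ≤ u := by linarith
  have hfac : (0:ℝ) ≤ 2*Lp+1 := by linarith
  -- lower bound for N
  have i1 : (2*p+1)*Lp - (2*p+1)*(2*v) ≤ (2*p+1)*Lm := by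
    have h := mul_le_mul_of_nonneg_left (show Lp - 2*v ≤ Lm by linarith)
      (show (0:ℝ) ≤ 2*p+1 by linarith)
    have e : (2*p+1)*(Lp - 2*v) = (2*p+1)*Lp - (2*p+1)*(2*v) := by ring
    linarith
  have i2 : (p+ε) - (p+ε)*v ≤ (p+ε)*u := by
    have h := mul_le_mul_of_nonneg_left hu1 (show (0:ℝ) ≤ p+ε by linarith)
    have e : (p+ε)*(1-v) = (p+ε) - (p+ε)*v := by ring
    linarith
  have inner : (2*p+1)*Lp + (p+ε) - ((2*p+1)*(2*v) + (p+ε)*v)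
      ≤ (2*p+1)*Lm + (p+ε)*u := by linarith
  have hNlow := mul_le_mul_of_nonneg_right inner hfac
  have eid : ((2*p+1)*Lp + (p+ε) - ((2*p+1)*(2*v) + (p+ε)*v))*(2*Lp+1)
      = ((4*p+2)*(Lp*Lp) + (4*p+1)*Lp + (p+1)) + 2*ε*Lp + (ε-1)
        - ((2*p+1)*(2*v) + (p+ε)*v)*(2*Lp+1) := by ring
  rw [eid] at hNlow
  -- upper bound for N
  have j1 : (2*p+1)*Lm ≤ (2*p+1)*Lp := mul_le_mul_of_nonneg_left hLmLp (by linarith)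
  have j2 : (p+ε)*u ≤ (p+ε) := by
    have h := mul_le_mul_of_nonneg_left hu2 (show (0:ℝ) ≤ p+ε by linarith)
    linarith [h]
  have inner2 : (2*p+1)*Lm + (p+ε)*u ≤ (2*p+1)*Lp + (p+ε) := by linarith
  have hNup := mul_le_mul_of_nonneg_right inner2 hfac
  have hN0 : 0 ≤ ((2*p+1)*Lm + (p+ε)*u)*(2*Lp+1) := by
    have a1 : 0 ≤ (2*p+1)*Lm := mul_nonneg (by linarith) (by linarith)
    have a2 : 0 ≤ (p+ε)*u := mul_nonneg (by linarith) hu0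
    exact mul_nonneg (by linarith) hfac
  -- rho product lower bound
  have hρ : 1 - (8*p+6)*v ≤ r1*r2 := by
    have hmul : (1 - (4*p+2)*v) * (1 - (2*p+2)*v) ≤ r1 * r2 :=
      mul_le_mul hρ1 hρ2 hρ2nn (le_trans hρ1nn hρ1)
    have e : (1 - (4*p+2)*v) * (1 - (2*p+2)*v)
        = 1 - (8*p+6)*v + ((2*p+2)*v + (4*p+2)*(2*p+2)*(v*v)) := by ring
    have q1 : 0 ≤ (2*p+2)*v := mul_nonneg (by linarith) hv0
    have q2 : 0 ≤ (4*p+2)*(2*p+2)*(v*v) := by positivity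
    linarith
  have hρN : ((2*p+1)*Lm + (p+ε)*u)*(2*Lp+1)
        - (8*p+6)*v*(((2*p+1)*Lp + (p+ε))*(2*Lp+1))
      ≤ r1*r2*(((2*p+1)*Lm + (p+ε)*u)*(2*Lp+1)) := by
    have h1 := mul_le_mul_of_nonneg_right hρ hN0
    have h2 := mul_le_mul_of_nonneg_left hNup
      (show (0:ℝ) ≤ (8*p+6)*v by positivity)
    have e : (1 - (8*p+6)*v) * (((2*p+1)*Lm + (p+ε)*u)*(2*Lp+1))
        = ((2*p+1)*Lm + (p+ε)*u)*(2*Lp+1)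
          - (8*p+6)*v*(((2*p+1)*Lm + (p+ε)*u)*(2*Lp+1)) := by ring
    linarith
  -- error bound
  have herr : ((2*p+1)*(2*v) + (p+ε)*v)*(2*Lp+1)
      + (8*p+6)*v*(((2*p+1)*Lp + (p+ε))*(2*Lp+1)) ≤ 1 := by
    have s1 : 0 ≤ Lp*Lp := mul_nonneg (by linarith) (by linarith)
    have e2 : 2*Lp+1 ≤ 2*(Lp+1)^2 := by nlinarith [s1]
    have e3 : ((2*p+1)*Lp + (p+ε))*(2*Lp+1) ≤ (3*p+1+ε)*2*(Lp+1)^2 := by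
      have eid3 : (3*p+1+ε)*2*(Lp+1)^2 - ((2*p+1)*Lp+(p+ε))*(2*Lp+1)
          = (2*p+2*ε)*(Lp*Lp) + (8*p+3+2*ε)*Lp + (5*p+2+ε) := by ring
      have q1 : 0 ≤ (2*p+2*ε)*(Lp*Lp) := mul_nonneg (by linarith) s1
      have q2 : 0 ≤ (8*p+3+2*ε)*Lp := mul_nonneg (by linarith) (by linarith)
      linarith
    have t1 : ((2*p+1)*(2*v) + (p+ε)*v)*(2*Lp+1) ≤ (5*p+2+ε)*v*(2*(Lp+1)^2) := by
      have ed : ((2*p+1)*(2*v) + (p+ε)*v) = (5*p+2+ε)*v := by ring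
      rw [ed]
      exact mul_le_mul_of_nonneg_left e2 (by positivity)
    have t2 : (8*p+6)*v*(((2*p+1)*Lp + (p+ε))*(2*Lp+1))
        ≤ (8*p+6)*v*((3*p+1+ε)*2*(Lp+1)^2) :=
      mul_le_mul_of_nonneg_left e3 (by positivity)
    have esum : (5*p+2+ε)*v*(2*(Lp+1)^2) + (8*p+6)*v*((3*p+1+ε)*2*(Lp+1)^2)
        = (2*(5*p+2+ε) + 2*(8*p+6)*(3*p+1+ε)) * (Lp+1)^2 * v := by ring
    linarith
  have hεLp : ε*Lm ≤ ε*Lp := mul_le_mul_of_nonneg_left hLmLp hε.le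
  linarith

lemma log_poly_small {K : ℝ} (hK : 0 < K) {y : ℝ} (hy3 : 3 ≤ y) (hyK : (50*K)^2 ≤ y) :
    K * (Real.log (y+2) + 1)^2 ≤ y := by
  set s := Real.sqrt (Real.sqrt (y+2)) with hs
  have hy2 : (1:ℝ) ≤ y + 2 := by linarith
  have hs1 : 1 ≤ s := by
    rw [hs]
    rw [show (1:ℝ) = Real.sqrt (Real.sqrt 1) by simp]
    exact Real.sqrt_le_sqrt (Real.sqrt_le_sqrt (by linarith))
  have hs0 : 0 < s := by linarith
  have hlog : Real.log (y+2) = 4 * Real.log s := by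
    rw [hs, Real.log_sqrt (Real.sqrt_nonneg _), Real.log_sqrt (by linarith)]
    ring
  have hls : Real.log s ≤ s := by
    have := Real.log_le_sub_one_of_pos hs0
    linarith
  have h2 : (Real.log (y+2) + 1)^2 ≤ 25 * s^2 := by
    rw [hlog]
    nlinarith [Real.log_nonneg hs1]
  have hss : s^2 = Real.sqrt (y+2) := by
    rw [hs, Real.sq_sqrt (Real.sqrt_nonneg _)]
  have h3 : Real.sqrt (y+2) ≤ 2 * Real.sqrt y := by
    rw [show (2:ℝ) * Real.sqrt y = Real.sqrt (4*y) by
      rw [show (4:ℝ)*y = 2^2*y by ring, Real.sqrt_mul (by positivity), Real.sqrt_sq (by norm_num)]]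
    exact Real.sqrt_le_sqrt (by linarith)
  have h4 : 50 * K ≤ Real.sqrt y := by
    have := Real.sqrt_le_sqrt hyK
    rwa [Real.sqrt_sq (by positivity)] at this
  have h5 : K * (Real.log (y+2) + 1)^2 ≤ K * (50 * Real.sqrt y) := by
    have : (Real.log (y+2) + 1)^2 ≤ 50 * Real.sqrt y := by
      rw [hss] at h2; nlinarith
    exact mul_le_mul_of_nonneg_left this hK.le
  have h6 : K * (50 * Real.sqrt y) ≤ Real.sqrt y * Real.sqrt y := by
    have h7 : 0 ≤ Real.sqrt y := Real.sqrt_nonneg y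
    nlinarith
  have h8 : Real.sqrt y * Real.sqrt y = y := Real.mul_self_sqrt (by linarith)
  linarith

lemma claimC {p ε : ℝ} (hp : 0 < p) (hε : 0 < ε) : ∃ M : ℝ, 3 ≤ M ∧ ∀ y : ℝ, M ≤ y →
    ε * Real.log y ≤
    ((y/(y+2)) ^ (2*p+1) * (Real.log y / Real.log (y+2)) ^ (p+1)) *
      (Real.log y * ((2*p+1) + (p+ε)/Real.log (y+1)) * (2*Real.log (y+2)+1))
    - ((4*p+2)*(Real.log (y+2)*Real.log (y+2)) + (4*p+1)*Real.log (y+2) + (p+1)) := by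
  have hKpos : 0 < 2*(5*p+2+ε) + 2*(8*p+6)*(3*p+1+ε) := by nlinarith
  refine ⟨max (max ((50*(2*(5*p+2+ε) + 2*(8*p+6)*(3*p+1+ε)))^2) (Real.exp (2/ε)))
    (max ((8*p+6)+3) 3), ?_, ?_⟩
  · exact le_trans (by norm_num) (le_max_of_le_right (le_max_right _ _))
  intro y hy
  have hy3 : 3 ≤ y := le_trans (le_max_of_le_right (le_max_right _ _)) hy
  have hyB : (8*p+6)+3 ≤ y := le_trans (le_max_of_le_right (le_max_left _ _)) hy
  have hyK : (50*(2*(5*p+2+ε) + 2*(8*p+6)*(3*p+1+ε)))^2 ≤ y :=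
    le_trans (le_max_of_le_left (le_max_left _ _)) hy
  have hyE : Real.exp (2/ε) ≤ y := le_trans (le_max_of_le_left (le_max_right _ _)) hy
  have hy0 : (0:ℝ) < y := by linarith
  have hLm1 : 1 ≤ Real.log y := by
    rw [← Real.log_exp 1]
    exact Real.log_le_log (Real.exp_pos 1) (by nlinarith [Real.exp_one_lt_d9])
  have hLmL : Real.log y ≤ Real.log (y+1) := Real.log_le_log hy0 (by linarith)
  have hLLp : Real.log (y+1) ≤ Real.log (y+2) := Real.log_le_log (by linarith) (by linarith)
  have hL1 : 1 ≤ Real.log (y+1) := le_trans hLm1 hLmL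
  have hLp1 : 1 ≤ Real.log (y+2) := le_trans hL1 hLLp
  have hL0 : (0:ℝ) < Real.log (y+1) := by linarith
  have hLp0 : (0:ℝ) < Real.log (y+2) := by linarith
  have hη1 : Real.log (y+1) - Real.log y ≤ 1/y := by
    rw [← Real.log_div (by linarith) (by linarith)]
    have := Real.log_le_sub_one_of_pos (show (0:ℝ) < (y+1)/y by positivity)
    have heq : (y+1)/y - 1 = 1/y := by
      rw [div_sub_one (by linarith : (y:ℝ) ≠ 0)]; norm_num
    linarith
  have hη2 : Real.log (y+2) - Real.log (y+1) ≤ 1/y := by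
    rw [← Real.log_div (by linarith) (by linarith)]
    have := Real.log_le_sub_one_of_pos (show (0:ℝ) < (y+2)/(y+1) by positivity)
    have heq : (y+2)/(y+1) - 1 = 1/(y+1) := by
      rw [div_sub_one (by linarith : (y:ℝ)+1 ≠ 0)]; norm_num
    have h9 : 1/(y+1) ≤ 1/y := by
      apply div_le_div_of_nonneg_left (by norm_num) hy0 (by linarith)
    linarith
  have hw : Real.log (y+2) - Real.log y ≤ 2*(1/y) := by linarith
  have hεLm : 2 ≤ ε * Real.log y := by
    have h2e : 2/ε ≤ Real.log y := by
      rw [← Real.log_exp (2/ε)]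
      exact Real.log_le_log (Real.exp_pos _) hyE
    calc (2:ℝ) = ε * (2/ε) := by field_simp
    _ ≤ ε * Real.log y := mul_le_mul_of_nonneg_left h2e hε.le
  have hKv : (2*(5*p+2+ε) + 2*(8*p+6)*(3*p+1+ε)) * (Real.log (y+2)+1)^2 * (1/y) ≤ 1 := by
    have hKsm := log_poly_small hKpos hy3 hyK
    have := mul_le_mul_of_nonneg_right hKsm (show (0:ℝ) ≤ 1/y by positivity)
    have hvy : y * (1/y) = 1 := by field_simp
    linarith
  have hρ1 : 1 - (4*p+2)*(1/y) ≤ (y/(y+2)) ^ (2*p+1) := by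
    have hb := one_add_mul_self_le_rpow_one_add
      (show (-1:ℝ) ≤ -(2/(y+2)) by
        have : 2/(y+2) ≤ 1 := by rw [div_le_one (by linarith)]; linarith
        linarith)
      (show (1:ℝ) ≤ 2*p+1 by linarith)
    have he1 : 1 + -(2/(y+2)) = y/(y+2) := by
      field_simp
      ring
    rw [he1] at hb
    have he2 : (2*p+1) * (2/(y+2)) ≤ (4*p+2)*(1/y) := by
      have e1 : (2*p+1)*(2/(y+2)) = (4*p+2)/(y+2) := by ring
      have e2 : (4*p+2)*(1/y) = (4*p+2)/y := by ring
      rw [e1, e2]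
      exact div_le_div_of_nonneg_left (by linarith) hy0 (by linarith)
    have he3 : 1 + (2*p+1) * -(2/(y+2)) = 1 - (2*p+1)*(2/(y+2)) := by ring
    linarith [hb, he3]
  have hρ2 : 1 - (2*p+2)*(1/y) ≤ (Real.log y/Real.log (y+2)) ^ (p+1) := by
    have hb := one_add_mul_self_le_rpow_one_add
      (show (-1:ℝ) ≤ -((Real.log (y+2) - Real.log y)/Real.log (y+2)) by
        have : (Real.log (y+2) - Real.log y)/Real.log (y+2) ≤ 1 := by
          rw [div_le_one hLp0]; linarith
        linarith)
      (show (1:ℝ) ≤ p+1 by linarith)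
    have he1 : 1 + -((Real.log (y+2) - Real.log y)/Real.log (y+2))
        = Real.log y/Real.log (y+2) := by
      field_simp
      ring
    rw [he1] at hb
    have he2 : (p+1) * ((Real.log (y+2) - Real.log y)/Real.log (y+2)) ≤ (2*p+2)*(1/y) := by
      have d1 : (Real.log (y+2) - Real.log y)/Real.log (y+2) ≤ Real.log (y+2) - Real.log y :=
        div_le_self (by linarith) hLp1
      have d2 : (p+1) * ((Real.log (y+2) - Real.log y)/Real.log (y+2)) ≤ (p+1) * (2*(1/y)) := by
        apply mul_le_mul_of_nonneg_left _ (by linarith)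
        linarith
      have e : (p+1)*(2*(1/y)) = (2*p+2)*(1/y) := by ring
      linarith
    have he3 : 1 + (p+1) * -((Real.log (y+2) - Real.log y)/Real.log (y+2))
        = 1 - (p+1) * ((Real.log (y+2) - Real.log y)/Real.log (y+2)) := by ring
    linarith [hb, he3]
  have hρ1nn : 0 ≤ 1 - (4*p+2)*(1/y) := by
    have : (4*p+2)*(1/y) ≤ 1 := by
      rw [show (4*p+2)*(1/y) = (4*p+2)/y by ring, div_le_one hy0]; linarith
    linarith
  have hρ2nn : 0 ≤ 1 - (2*p+2)*(1/y) := by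
    have : (2*p+2)*(1/y) ≤ 1 := by
      rw [show (2*p+2)*(1/y) = (2*p+2)/y by ring, div_le_one hy0]; linarith
    linarith
  have hu1 : 1 - 1/y ≤ Real.log y/Real.log (y+1) := by
    have e : Real.log y/Real.log (y+1) = 1 - (Real.log (y+1) - Real.log y)/Real.log (y+1) := by
      field_simp
      ring
    have d1 : (Real.log (y+1) - Real.log y)/Real.log (y+1) ≤ Real.log (y+1) - Real.log y :=
      div_le_self (by linarith) hL1
    linarith
  have hu2 : Real.log y/Real.log (y+1) ≤ 1 := by
    rw [div_le_one hL0]; exact hLmL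
  have core := claimC_core hp hε (show (0:ℝ) ≤ 1/y by positivity)
    hLm1 (le_trans hLmL hLLp) hw hεLm hKv hρ1 hρ2 hρ1nn hρ2nn hu1 hu2
  have efin : ((y/(y+2)) ^ (2*p+1) * (Real.log y / Real.log (y+2)) ^ (p+1)) *
      (Real.log y * ((2*p+1) + (p+ε)/Real.log (y+1)) * (2*Real.log (y+2)+1))
      = ((y/(y+2)) ^ (2*p+1) * (Real.log y / Real.log (y+2)) ^ (p+1)) *
        (((2*p+1)*Real.log y + (p+ε)*(Real.log y/Real.log (y+1)))*(2*Real.log (y+2)+1)) := by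
    ring
  rw [efin]
  exact core

lemma key {p ε : ℝ} (hp : 0 < p) (hε : 0 < ε) : ∃ M : ℝ, 3 ≤ M ∧ ∀ x : ℝ, M ≤ x - 1 →
    p*ε*(min 1 (2^(1-ε))) * (Real.log x ^ (ε-1) / x) ≤
      (x-1)^(2*p) * Real.log (x-1) ^ (p+ε) * ((2*p+1) + (p+ε)/Real.log x)
        * (p * ((x+1) ^ (-(2*p)-1) * Real.log (x+1) ^ (-p-1) * (2*Real.log (x+1) + 1)))
      - ((x-1)^(2*p+1) * Real.log (x-1) ^ (p+ε))
        * (p * ((x-1) ^ (-(2*p)-2) * Real.log (x-1) ^ (-p-2) *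
          ((4*p+2)*(Real.log (x+1)*Real.log (x+1)) + (4*p+1)*Real.log (x+1) + (p+1)))) := by
  obtain ⟨M, hM3, hMp⟩ := claimC hp hε
  refine ⟨M, hM3, ?_⟩
  intro x hx
  have hy3 : 3 ≤ x - 1 := le_trans hM3 hx
  have hy0 : (0:ℝ) < x - 1 := by linarith
  have hx0 : (0:ℝ) < x := by linarith
  have hz0 : (0:ℝ) < x + 1 := by linarith
  have hLm0 : (0:ℝ) < Real.log (x-1) := Real.log_pos (by linarith)
  have hL0 : (0:ℝ) < Real.log x := Real.log_pos (by linarith)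
  have hLp0 : (0:ℝ) < Real.log (x+1) := Real.log_pos (by linarith)
  have hLmL : Real.log (x-1) ≤ Real.log x := Real.log_le_log hy0 (by linarith)
  have hC := hMp (x-1) hx
  rw [show x - 1 + 2 = x + 1 by ring, show x - 1 + 1 = x by ring] at hC
  -- rpow decompositions
  have d1 : ((x-1)/(x+1))^(2*p+1) = (x-1)^(2*p+1)/(x+1)^(2*p+1) :=
    Real.div_rpow hy0.le hz0.le _
  have d2 : (x+1)^(-(2*p)-1) = ((x+1)^(2*p+1))⁻¹ := by
    rw [show -(2*p)-1 = -(2*p+1) by ring, Real.rpow_neg hz0.le]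
  have d3 : (x-1)^(2*p+1) = (x-1)^(2*p)*(x-1) := Real.rpow_add_one hy0.ne' _
  have d4 : (Real.log (x-1)/Real.log (x+1))^(p+1)
      = Real.log (x-1)^(p+1)/Real.log (x+1)^(p+1) :=
    Real.div_rpow hLm0.le hLp0.le _
  have d5 : Real.log (x+1)^(-p-1) = (Real.log (x+1)^(p+1))⁻¹ := by
    rw [show -p-1 = -(p+1) by ring, Real.rpow_neg hLp0.le]
  have d6 : Real.log (x-1)^(ε-2) * Real.log (x-1)^(p+1) * Real.log (x-1)
      = Real.log (x-1)^(p+ε) := by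
    rw [← Real.rpow_add hLm0, ← Real.rpow_add_one (ne_of_gt hLm0)]
    congr 1; ring
  have d11 : Real.log (x-1)^(p+ε) = Real.log (x-1)^(ε-2) * Real.log (x-1)^(p+2) := by
    rw [← Real.rpow_add hLm0]; congr 1; ring
  have d12 : (x-1)^(-(2*p)-2) = ((x-1)^(2*p+1)*(x-1))⁻¹ := by
    rw [show -(2*p)-2 = -((2*p+1)+1) by ring, Real.rpow_neg hy0.le,
      Real.rpow_add_one hy0.ne']
  have d13 : Real.log (x-1)^(-p-2) = (Real.log (x-1)^(p+2))⁻¹ := by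
    rw [show -p-2 = -(p+2) by ring, Real.rpow_neg hLm0.le]
  -- nonzero facts
  have n1 : (x+1)^(2*p+1) ≠ 0 := by positivity
  have n2 : Real.log (x+1)^(p+1) ≠ 0 := by positivity
  have n3 : (x-1) ≠ 0 := hy0.ne'
  have n4 : Real.log (x-1)^(p+2) ≠ 0 := by positivity
  have n5 : (x-1)^(2*p+1) ≠ 0 := by positivity
  have n6 : (x-1)^(2*p) ≠ 0 := by positivity
  -- the two product identities
  have ea : (x-1)^(2*p) * Real.log (x-1) ^ (p+ε) * ((2*p+1) + (p+ε)/Real.log x)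
        * (p * ((x+1) ^ (-(2*p)-1) * Real.log (x+1) ^ (-p-1) * (2*Real.log (x+1) + 1)))
      = (p * Real.log (x-1)^(ε-2) / (x-1)) *
        ((((x-1)/(x+1)) ^ (2*p+1) * (Real.log (x-1) / Real.log (x+1)) ^ (p+1)) *
          (Real.log (x-1) * ((2*p+1) + (p+ε)/Real.log x) * (2*Real.log (x+1)+1))) := by
    rw [d1, d2, d4, d5, d3, ← d6]
    field_simp
  have eb : ((x-1)^(2*p+1) * Real.log (x-1) ^ (p+ε))
        * (p * ((x-1) ^ (-(2*p)-2) * Real.log (x-1) ^ (-p-2) *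
          ((4*p+2)*(Real.log (x+1)*Real.log (x+1)) + (4*p+1)*Real.log (x+1) + (p+1))))
      = (p * Real.log (x-1)^(ε-2) / (x-1)) *
        ((4*p+2)*(Real.log (x+1)*Real.log (x+1)) + (4*p+1)*Real.log (x+1) + (p+1)) := by
    rw [d11, d12, d13]
    field_simp
  have hP0 : (0:ℝ) ≤ p * Real.log (x-1)^(ε-2) / (x-1) := by positivity
  have main := mul_le_mul_of_nonneg_left hC hP0
  rw [mul_sub] at main
  rw [ea, eb]
  -- step 2 : lower bound P * (ε * Lm)
  have d14 : Real.log (x-1)^(ε-2) * Real.log (x-1) = Real.log (x-1)^(ε-1) := by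
    rw [← Real.rpow_add_one (ne_of_gt hLm0)]; congr 1; ring
  have hL2 : Real.log x ≤ 2*Real.log (x-1) := by
    have e : (x-1)*(x-1) = (x-1)^2 := by ring
    have h1 : Real.log x ≤ Real.log ((x-1)*(x-1)) :=
      Real.log_le_log hx0 (by nlinarith)
    rw [Real.log_mul n3 n3] at h1
    linarith
  have hmin : min 1 ((2:ℝ)^(1-ε)) * Real.log x ^ (ε-1) ≤ Real.log (x-1) ^ (ε-1) := by
    rcases le_or_gt 1 ε with h1 | h1
    · have hmle : min 1 ((2:ℝ)^(1-ε)) ≤ (2:ℝ)^(1-ε) := min_le_right _ _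
      have e2 : (2:ℝ)^(1-ε) * Real.log x ^ (ε-1) = (Real.log x/2)^(ε-1) := by
        rw [Real.div_rpow hL0.le (by norm_num : (0:ℝ) ≤ 2),
          show (1-ε : ℝ) = -(ε-1) by ring, Real.rpow_neg (by norm_num : (0:ℝ) ≤ 2)]
        field_simp
      have e3 : (Real.log x/2)^(ε-1) ≤ Real.log (x-1)^(ε-1) :=
        Real.rpow_le_rpow (by positivity) (by linarith) (by linarith)
      have e4 := mul_le_mul_of_nonneg_right hmle
        (show (0:ℝ) ≤ Real.log x ^ (ε-1) by positivity)
      rw [e2] at e4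
      linarith
    · have hmle : min 1 ((2:ℝ)^(1-ε)) ≤ 1 := min_le_left _ _
      have e3 : Real.log x ^ (ε-1) ≤ Real.log (x-1)^(ε-1) :=
        Real.rpow_le_rpow_of_nonpos hLm0 hLmL (by linarith)
      have e4 := mul_le_mul_of_nonneg_right hmle
        (show (0:ℝ) ≤ Real.log x ^ (ε-1) by positivity)
      rw [one_mul] at e4
      linarith
  have hinv : 1/x ≤ 1/(x-1) := by
    apply div_le_div_of_nonneg_left (by norm_num) hy0 (by linarith)
  have step2 : p*ε*(min 1 ((2:ℝ)^(1-ε))) * (Real.log x ^ (ε-1) / x)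
      ≤ (p * Real.log (x-1)^(ε-2) / (x-1)) * (ε*Real.log (x-1)) := by
    have hcross : min 1 ((2:ℝ)^(1-ε)) * Real.log x ^ (ε-1) * (1/x)
        ≤ Real.log (x-1)^(ε-1) * (1/(x-1)) := by
      apply mul_le_mul hmin hinv (by positivity)
      positivity
    have e5 : (p * Real.log (x-1)^(ε-2) / (x-1)) * (ε*Real.log (x-1))
        = (p*ε) * (Real.log (x-1)^(ε-1) * (1/(x-1))) := by
      rw [← d14]; ring
    have e6 : p*ε*(min 1 ((2:ℝ)^(1-ε))) * (Real.log x ^ (ε-1) / x)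
        = (p*ε) * (min 1 ((2:ℝ)^(1-ε)) * Real.log x ^ (ε-1) * (1/x)) := by ring
    rw [e5, e6]
    exact mul_le_mul_of_nonneg_left hcross (by positivity)
  linarith

theorem stmt_12 (σ ε : ℝ) (hσ : 1 < σ) (hε : 0 < ε) :
    ∃ (n0 : ℕ) (δ : ℝ), 2 ≤ n0 ∧ 0 < δ ∧
      ∀ w u : ℕ → ℝ,
        (∀ n : ℕ, w n = ((n : ℝ) + n0) ^ (2 * (1 / (σ - 1)) + 1) *
            Real.log ((n : ℝ) + n0) ^ (1 / (σ - 1) + ε)) →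
        (∀ n : ℕ, u n = δ / (((n : ℝ) + n0) ^ (2 * (1 / (σ - 1))) *
            Real.log ((n : ℝ) + n0) ^ (1 / (σ - 1)))) →
        (u 1 - u 0 + u 0 ^ σ ≤ 0 ∧
          ∀ n : ℕ, 1 ≤ n →
            (w n * u (n + 1) + w (n - 1) * u (n - 1)) / (w n + w (n - 1))
              - u n + u n ^ σ ≤ 0) := by
  obtain ⟨p, hpdef⟩ : ∃ p : ℝ, p = 1/(σ-1) := ⟨_, rfl⟩
  have hσ1 : (0:ℝ) < σ - 1 := by linarith
  have hp : 0 < p := by rw [hpdef]; positivity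
  have hp1 : p * (σ - 1) = 1 := by rw [hpdef]; field_simp
  obtain ⟨M, hM3, hkey⟩ := key hp hε
  -- choose n0
  obtain ⟨n0, hn0⟩ := exists_nat_ge (max (M+1) 3)
  have hn0M : M + 1 ≤ (n0:ℝ) := le_trans (le_max_left _ _) hn0
  have hn03 : (3:ℝ) ≤ (n0:ℝ) := le_trans (le_max_right _ _) hn0
  have hn02 : 2 ≤ n0 := by exact_mod_cast le_trans (by norm_num : (2:ℝ) ≤ 3) hn03
  have hn00 : (0:ℝ) < (n0:ℝ) := by linarith
  have hLn0 : 0 < Real.log (n0:ℝ) := Real.log_pos (by linarith)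
  have hLn10 : 0 < Real.log ((n0:ℝ)+1) := Real.log_pos (by linarith)
  -- constants and delta
  set c0 : ℝ := p*ε*(min 1 ((2:ℝ)^(1-ε))) with hc0def
  have hc00 : 0 < c0 := by
    rw [hc0def]
    have : (0:ℝ) < min 1 ((2:ℝ)^(1-ε)) := lt_min one_pos (Real.rpow_pos_of_pos two_pos _)
    positivity
  set Gb : ℝ := p * (((n0:ℝ)+1) ^ (-(2*p)-1) * Real.log ((n0:ℝ)+1) ^ (-p-1) *
    (2*Real.log ((n0:ℝ)+1) + 1)) with hGbdef
  have hGb0 : 0 < Gb := by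
    rw [hGbdef]
    have r1 : 0 < ((n0:ℝ)+1) ^ (-(2*p)-1) := Real.rpow_pos_of_pos (by linarith) _
    have r2 : 0 < Real.log ((n0:ℝ)+1) ^ (-p-1) := Real.rpow_pos_of_pos hLn10 _
    positivity
  set c2 : ℝ := Gb * ((n0:ℝ)^(2*p+2) * Real.log (n0:ℝ) ^ (p+1)) with hc2def
  have hc20 : 0 < c2 := by
    rw [hc2def]
    have r1 : 0 < (n0:ℝ)^(2*p+2) := Real.rpow_pos_of_pos hn00 _
    have r2 : 0 < Real.log (n0:ℝ) ^ (p+1) := Real.rpow_pos_of_pos hLn0 _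
    positivity
  set m : ℝ := min (c0/2) c2 with hmdef
  have hm0 : 0 < m := lt_min (by positivity) hc20
  set δ : ℝ := m ^ p with hδdef
  have hδ0 : 0 < δ := Real.rpow_pos_of_pos hm0 p
  have hδσ1 : δ ^ (σ-1) = m := by
    rw [hδdef, ← Real.rpow_mul hm0.le, show p*(σ-1) = 1 from hp1, Real.rpow_one]
  have hδσ : δ ^ σ = m * δ := by
    rw [show σ = (σ-1)+1 by ring, Real.rpow_add_one hδ0.ne', hδσ1]
  refine ⟨n0, δ, hn02, hδ0, ?_⟩
  intro w u hw hu
  rw [← hpdef] at hw hu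
  -- u in terms of GG
  have hux : ∀ n : ℕ, (1:ℝ) < (n:ℝ) + n0 → u n = δ * GG p ((n:ℝ) + n0) := by
    intro n hn1
    have hxn0 : (0:ℝ) < (n:ℝ) + n0 := by linarith
    have hln : 0 < Real.log ((n:ℝ)+n0) := Real.log_pos hn1
    rw [hu n]
    unfold GG
    rw [Real.rpow_neg hxn0.le, Real.rpow_neg hln.le]
    rw [div_eq_mul_inv, mul_inv]
  -- u ^ σ formula
  have huσ : ∀ n : ℕ, (1:ℝ) < (n:ℝ) + n0 →
      (u n) ^ σ = δ^σ * (((n:ℝ)+n0) ^ (-(2*p)-2) * Real.log ((n:ℝ)+n0) ^ (-p-1)) := by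
    intro n hn1
    have hxn0 : (0:ℝ) < (n:ℝ) + n0 := by linarith
    have hln : 0 < Real.log ((n:ℝ)+n0) := Real.log_pos hn1
    rw [hux n hn1]
    unfold GG
    rw [Real.mul_rpow hδ0.le (by positivity), Real.mul_rpow (by positivity) (by positivity)]
    rw [← Real.rpow_mul hxn0.le, ← Real.rpow_mul hln.le,
      show (-(2*p))*σ = -(2*p)-2 by linear_combination (-2)*hp1,
      show (-p)*σ = -p-1 by linear_combination (-1)*hp1]
  constructor
  · -- base case n = 0
    have hb0 : (1:ℝ) < ((0:ℕ):ℝ) + n0 := by push_cast; linarith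
    have hb1 : (1:ℝ) < ((1:ℕ):ℝ) + n0 := by push_cast; linarith
    have hu0 := hux 0 hb0
    have hu1 := hux 1 hb1
    have huσ0 := huσ 0 hb0
    have hz : ((0:ℕ):ℝ) + (n0:ℝ) = (n0:ℝ) := by push_cast; ring
    have ho : ((1:ℕ):ℝ) + (n0:ℝ) = (n0:ℝ) + 1 := by push_cast; ring
    rw [hz] at hu0 huσ0
    rw [ho] at hu1
    have hdiff := GG_diff_lower hp (x := (n0:ℝ)) (by linarith)
    -- c2 * A = Gb
    have hA : (n0:ℝ) ^ (-(2*p)-2) * Real.log (n0:ℝ) ^ (-p-1)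
        = ((n0:ℝ)^(2*p+2))⁻¹ * (Real.log (n0:ℝ) ^ (p+1))⁻¹ := by
      rw [show -(2*p)-2 = -(2*p+2) by ring, show -p-1 = -(p+1) by ring,
        Real.rpow_neg hn00.le, Real.rpow_neg hLn0.le]
    have hn2p : (0:ℝ) < (n0:ℝ)^(2*p+2) := Real.rpow_pos_of_pos hn00 _
    have hlp1 : (0:ℝ) < Real.log (n0:ℝ) ^ (p+1) := Real.rpow_pos_of_pos hLn0 _
    have hc2A : c2 * ((n0:ℝ) ^ (-(2*p)-2) * Real.log (n0:ℝ) ^ (-p-1)) = Gb := by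
      rw [hA, hc2def]
      field_simp
    have hmc2 : m ≤ c2 := min_le_right _ _
    have hA0 : 0 ≤ (n0:ℝ) ^ (-(2*p)-2) * Real.log (n0:ℝ) ^ (-p-1) := by positivity
    have hstep : u 0 ^ σ ≤ δ * Gb := by
      rw [huσ0, hδσ]
      have h1 : m * δ * ((n0:ℝ) ^ (-(2*p)-2) * Real.log (n0:ℝ) ^ (-p-1))
          ≤ c2 * δ * ((n0:ℝ) ^ (-(2*p)-2) * Real.log (n0:ℝ) ^ (-p-1)) := by
        apply mul_le_mul_of_nonneg_right _ hA0
        exact mul_le_mul_of_nonneg_right hmc2 hδ0.le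
      have h2 : c2 * δ * ((n0:ℝ) ^ (-(2*p)-2) * Real.log (n0:ℝ) ^ (-p-1)) = δ * Gb := by
        rw [mul_comm c2 δ, mul_assoc, hc2A]
      linarith
    have hdd : δ * Gb ≤ δ * (GG p (n0:ℝ) - GG p ((n0:ℝ)+1)) := by
      apply mul_le_mul_of_nonneg_left _ hδ0.le
      rw [hGbdef]
      exact hdiff
    have edist : δ*(GG p (n0:ℝ) - GG p ((n0:ℝ)+1)) = δ*GG p (n0:ℝ) - δ*GG p ((n0:ℝ)+1) := by
      ring
    linarith [hstep, hdd, hu0, hu1, edist]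
  · -- main case
    intro n hn
    have hn1 : (1:ℝ) ≤ (n:ℝ) := by exact_mod_cast hn
    obtain ⟨x, hxdef⟩ : ∃ x : ℝ, x = (n:ℝ) + n0 := ⟨_, rfl⟩
    have hx4 : 4 ≤ x := by rw [hxdef]; linarith
    have hx0 : (0:ℝ) < x := by linarith
    have hy0 : (0:ℝ) < x - 1 := by linarith
    have hMx : M ≤ x - 1 := by rw [hxdef]; linarith
    have hL0 : 0 < Real.log x := Real.log_pos (by linarith)
    have hLm0 : 0 < Real.log (x-1) := Real.log_pos (by linarith)
    have hLp0 : 0 < Real.log (x+1) := Real.log_pos (by linarith)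
    have hLmL : Real.log (x-1) ≤ Real.log x := Real.log_le_log hy0 (by linarith)
    have hcast1 : ((n+1:ℕ):ℝ) + (n0:ℝ) = x + 1 := by push_cast; rw [hxdef]; ring
    have hcast2 : ((n-1:ℕ):ℝ) + (n0:ℝ) = x - 1 := by
      have hcs : ((n-1:ℕ):ℝ) = (n:ℝ) - 1 := by
        rw [Nat.cast_sub hn]; push_cast; ring
      rw [hcs, hxdef]; ring
    have hwn : w n = FF p ε x := by rw [hw n, ← hxdef]; rfl
    have hwn1 : w (n-1) = FF p ε (x-1) := by rw [hw (n-1), hcast2]; rfl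
    have hun : u n = δ * GG p x := by
      have := hux n (by rw [← hxdef]; linarith)
      rwa [← hxdef] at this
    have hun1 : u (n+1) = δ * GG p (x+1) := by
      have := hux (n+1) (by rw [hcast1]; linarith)
      rwa [hcast1] at this
    have hun2 : u (n-1) = δ * GG p (x-1) := by
      have := hux (n-1) (by rw [hcast2]; linarith)
      rwa [hcast2] at this
    have huσn : u n ^ σ = δ^σ * (x ^ (-(2*p)-2) * Real.log x ^ (-p-1)) := by
      have := huσ n (by rw [← hxdef]; linarith)
      rwa [← hxdef] at this
    have hFFx : 0 < FF p ε x := by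
      unfold FF
      exact mul_pos (Real.rpow_pos_of_pos hx0 _) (Real.rpow_pos_of_pos hL0 _)
    have hFFy : 0 < FF p ε (x-1) := by
      unfold FF
      exact mul_pos (Real.rpow_pos_of_pos hy0 _) (Real.rpow_pos_of_pos hLm0 _)
    have hW : 0 < w n + w (n-1) := by rw [hwn, hwn1]; linarith
    have hgoal : (w n * u (n+1) + w (n-1) * u (n-1)) / (w n + w (n-1)) - u n + u n ^ σ
        = (w n * u (n+1) + w (n-1) * u (n-1) - (w n + w (n-1)) * u n
           + (w n + w (n-1)) * u n ^ σ) / (w n + w (n-1)) := by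
      field_simp
    rw [hgoal]
    rw [div_nonpos_iff]
    refine Or.inr ⟨?_, hW.le⟩
    rw [huσn, hwn, hwn1, hun, hun1, hun2]
    -- bounds
    have hdF := FF_diff_lower hp hε (show (3:ℝ) ≤ x by linarith)
    have hdG := GG_diff_lower hp (show (2:ℝ) ≤ x by linarith)
    have hdS := GG_seconddiff_upper hp (show (3:ℝ) ≤ x by linarith)
    have hkx := hkey x hMx
    have hGb' : 0 < p * ((x+1) ^ (-(2*p)-1) * Real.log (x+1) ^ (-p-1) * (2*Real.log (x+1) + 1)) := by
      have r1 : 0 < (x+1) ^ (-(2*p)-1) := Real.rpow_pos_of_pos (by linarith) _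
      have r2 : 0 < Real.log (x+1) ^ (-p-1) := Real.rpow_pos_of_pos hLp0 _
      positivity
    have hFl0 : 0 ≤ (x-1) ^ (2*p) * Real.log (x-1) ^ (p+ε) * ((2*p+1) + (p+ε)/Real.log x) := by
      have r1 : 0 < (x-1) ^ (2*p) := Real.rpow_pos_of_pos hy0 _
      have r2 : 0 < Real.log (x-1) ^ (p+ε) := Real.rpow_pos_of_pos hLm0 _
      have r3 : 0 < (2*p+1) + (p+ε)/Real.log x := by positivity
      positivity
    have mul1 : ((x-1) ^ (2*p) * Real.log (x-1) ^ (p+ε) * ((2*p+1) + (p+ε)/Real.log x))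
          * (p * ((x+1) ^ (-(2*p)-1) * Real.log (x+1) ^ (-p-1) * (2*Real.log (x+1) + 1)))
        ≤ (FF p ε x - FF p ε (x-1)) * (GG p x - GG p (x+1)) :=
      mul_le_mul hdF hdG hGb'.le (le_trans hFl0 hdF)
    have eFFy : FF p ε (x-1) = (x-1)^(2*p+1) * Real.log (x-1) ^ (p+ε) := rfl
    have mul2 : FF p ε (x-1) * (GG p (x+1) - 2*GG p x + GG p (x-1))
        ≤ ((x-1)^(2*p+1) * Real.log (x-1) ^ (p+ε))
          * (p * ((x-1) ^ (-(2*p)-2) * Real.log (x-1) ^ (-p-2) *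
            ((4*p+2)*(Real.log (x+1)*Real.log (x+1)) + (4*p+1)*Real.log (x+1) + (p+1)))) := by
      rw [← eFFy]
      exact mul_le_mul_of_nonneg_left hdS hFFy.le
    have hT : c0 * (Real.log x ^ (ε-1) / x)
        ≤ (FF p ε x - FF p ε (x-1)) * (GG p x - GG p (x+1))
          - FF p ε (x-1) * (GG p (x+1) - 2*GG p x + GG p (x-1)) := by
      linarith [hkx, mul1, mul2]
    -- weight sum bound
    have hmono : FF p ε (x-1) ≤ FF p ε x := by
      unfold FF
      apply mul_le_mul (Real.rpow_le_rpow hy0.le (by linarith) (by linarith))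
        (Real.rpow_le_rpow hLm0.le hLmL (by linarith))
        (le_of_lt (Real.rpow_pos_of_pos hLm0 _)) (le_of_lt (Real.rpow_pos_of_pos hx0 _))
    have hAσ : 0 ≤ x ^ (-(2*p)-2) * Real.log x ^ (-p-1) := by positivity
    have hQpos : (0:ℝ) ≤ Real.log x ^ (ε-1) / x := by positivity
    have hcollapse : 2 * FF p ε x * (δ^σ * (x ^ (-(2*p)-2) * Real.log x ^ (-p-1)))
        = 2 * δ^σ * (Real.log x ^ (ε-1) / x) := by
      unfold FF
      have i1 : x^(2*p+1) * x^(-(2*p)-2) = x⁻¹ := by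
        rw [← Real.rpow_add hx0, show (2*p+1)+(-(2*p)-2) = (-1:ℝ) by ring,
          Real.rpow_neg_one]
      have i2 : Real.log x^(p+ε) * Real.log x^(-p-1) = Real.log x^(ε-1) := by
        rw [← Real.rpow_add hL0]; congr 1; ring
      calc 2 * (x^(2*p+1) * Real.log x^(p+ε)) * (δ^σ * (x ^ (-(2*p)-2) * Real.log x ^ (-p-1)))
          = 2 * δ^σ * ((x^(2*p+1) * x^(-(2*p)-2)) * (Real.log x^(p+ε) * Real.log x^(-p-1))) := by
            ring
      _ = 2 * δ^σ * (x⁻¹ * Real.log x^(ε-1)) := by rw [i1, i2]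
      _ = 2 * δ^σ * (Real.log x ^ (ε-1) / x) := by ring
    have hWu : (FF p ε x + FF p ε (x-1)) * (δ^σ * (x ^ (-(2*p)-2) * Real.log x ^ (-p-1)))
        ≤ 2 * δ^σ * (Real.log x ^ (ε-1) / x) := by
      rw [← hcollapse]
      apply mul_le_mul_of_nonneg_right _ (by positivity)
      linarith
    -- combine
    have hδT : δ * (c0 * (Real.log x ^ (ε-1) / x))
        ≤ δ * ((FF p ε x - FF p ε (x-1)) * (GG p x - GG p (x+1))
          - FF p ε (x-1) * (GG p (x+1) - 2*GG p x + GG p (x-1))) :=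
      mul_le_mul_of_nonneg_left hT hδ0.le
    have hfin : 2 * δ^σ * (Real.log x ^ (ε-1) / x) ≤ δ * (c0 * (Real.log x ^ (ε-1) / x)) := by
      have hmm : 2 * δ^σ ≤ δ * c0 := by
        rw [hδσ]
        have h12 := mul_le_mul_of_nonneg_right (min_le_left (c0/2) c2) hδ0.le
        linarith [h12]
      have h13 := mul_le_mul_of_nonneg_right hmm hQpos
      linarith [h13]
    have eE : FF p ε x*(δ*GG p (x+1)) + FF p ε (x-1)*(δ*GG p (x-1))
        - (FF p ε x + FF p ε (x-1))*(δ*GG p x)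
        = -(δ * ((FF p ε x - FF p ε (x-1)) * (GG p x - GG p (x+1))
          - FF p ε (x-1) * (GG p (x+1) - 2*GG p x + GG p (x-1)))) := by ring
    linarith [hδT, hfin, hWu, eE]
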